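/- In a DAG G with two-layer partition X ≺ Y, for any j ∈ Y the Markov blanket of j consists of pa_j ∪ ch_j ∪ {spouses of j}, and the conditional Markov blanket of j given all of X satisfies cmb_X(j) ⊆ Y and contains pa_j ∩ Y; consequently, the searching loop restricted to subsets T of cmb_X(j) always includes the d-separating set T = pa_j ∩ Y. -/

import Mathlib

/-- Directed reachability in a digraph (reflexive-transitive closure of the edge relation). -/
def Reaches {V : Type*} (G : V → V → Prop) : V → V → Prop := Relation.ReflTransGen G

/-- A digraph is acyclic if no vertex lies on a directed cycle. -/
def Acyclic {V : Type*} (G : V → V → Prop) : Prop := ∀ v, ¬ Relation.TransGen G v v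

/-- `p` is an (undirected) path from `a` to `b` in the digraph `G`. -/
def IsTrail {V : Type*} (G : V → V → Prop) (a b : V) (p : List V) : Prop :=
  p.Chain' (fun x y => G x y ∨ G y x) ∧ p.head? = some a ∧ p.getLast? = some b ∧ p.Nodup

/-- Consecutive triples of a list. -/
def triples {V : Type*} : List V → List (V × V × V)
  | x :: y :: z :: r => (x, y, z) :: triples (y :: z :: r)
  | _ => []

/-- A triple `(x, y, z)` on a path is blocked by `S` if `y` is a collider none of whose
descendants lies in `S`, or `y` is a non-collider belonging to `S`. -/
def BlockedTriple {V : Type*} [DecidableEq V] (G : V → V → Prop) (S : Finset V)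
    (t : V × V × V) : Prop :=
  (G t.1 t.2.1 ∧ G t.2.2 t.2.1 ∧ ∀ d, Reaches G t.2.1 d → d ∉ S)
  ∨ (¬ (G t.1 t.2.1 ∧ G t.2.2 t.2.1) ∧ t.2.1 ∈ S)

/-- A path is blocked by `S` if some internal triple is blocked. -/
def Blocked {V : Type*} [DecidableEq V] (G : V → V → Prop) (S : Finset V) (p : List V) : Prop :=
  ∃ t ∈ triples p, BlockedTriple G S t

/-- `S` d-separates `a` and `b` in `G` if every path between them is blocked. -/
def DSep {V : Type*} [DecidableEq V] (G : V → V → Prop) (S : Finset V) (a b : V) : Prop :=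
  ∀ p : List V, IsTrail G a b p → Blocked G S p

/-! ### Auxiliary lemmas -/

lemma mem_of_getLast?' {α : Type*} {l : List α} {a : α} (h : l.getLast? = some a) : a ∈ l := by
  obtain ⟨h1, h2⟩ := List.mem_getLast?_eq_getLast h
  exact h2 ▸ List.getLast_mem h1

lemma mem_triples_iff {V : Type*} {p : List V} {x y z : V} :
    (x, y, z) ∈ triples p ↔ ∃ l r, p = l ++ x :: y :: z :: r := by
  induction p with
  | nil =>
    simp only [triples, List.not_mem_nil, false_iff]
    rintro ⟨l, r, h⟩
    apply_fun List.length at h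
    simp at h
  | cons a q ih =>
    rcases q with _ | ⟨b, q2⟩
    · simp only [triples, List.not_mem_nil, false_iff]
      rintro ⟨l, r, h⟩
      apply_fun List.length at h
      simp at h
      omega
    rcases q2 with _ | ⟨c, r0⟩
    · simp only [triples, List.not_mem_nil, false_iff]
      rintro ⟨l, r, h⟩
      apply_fun List.length at h
      simp at h
      omega
    constructor
    · intro h
      rcases List.mem_cons.mp h with h | h
      · refine ⟨[], r0, ?_⟩
        obtain ⟨h1, h2, h3⟩ := Prod.mk.injEq .. ▸ h
        simp_all
      · obtain ⟨l, r, hl⟩ := ih.mp h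
        exact ⟨a :: l, r, by simp [hl]⟩
    · rintro ⟨l, r, hl⟩
      rcases l with _ | ⟨a', l'⟩
      · simp only [List.nil_append, List.cons.injEq] at hl
        obtain ⟨h1, h2, h3, h4⟩ := hl
        subst h1; subst h2; subst h3
        simp [triples]
      · simp only [List.cons_append, List.cons.injEq] at hl
        exact List.mem_cons_of_mem _ (ih.mpr ⟨l', r, hl.2⟩)

lemma mem_triples_reverse {V : Type*} {p : List V} {x y z : V} :
    (x, y, z) ∈ triples p.reverse ↔ (z, y, x) ∈ triples p := by
  rw [mem_triples_iff, mem_triples_iff]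
  constructor
  · rintro ⟨l, r, h⟩
    refine ⟨r.reverse, l.reverse, ?_⟩
    have h2 := congrArg List.reverse h
    simp only [List.reverse_reverse, List.reverse_append, List.reverse_cons,
      List.append_assoc] at h2
    simpa using h2
  · rintro ⟨l, r, h⟩
    refine ⟨r.reverse, l.reverse, ?_⟩
    have h2 := congrArg List.reverse h
    simp only [List.reverse_append, List.reverse_cons, List.append_assoc] at h2
    simpa using h2

lemma blockedTriple_comm {V : Type*} [DecidableEq V] (G : V → V → Prop) (S : Finset V)
    (x y z : V) : BlockedTriple G S (x, y, z) ↔ BlockedTriple G S (z, y, x) := by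
  unfold BlockedTriple
  simp only
  tauto

lemma blocked_reverse_iff {V : Type*} [DecidableEq V] (G : V → V → Prop) (S : Finset V)
    (p : List V) : Blocked G S p.reverse ↔ Blocked G S p := by
  constructor
  · rintro ⟨⟨x, y, z⟩, hm, hb⟩
    exact ⟨(z, y, x), mem_triples_reverse.mp hm, (blockedTriple_comm G S x y z).mp hb⟩
  · rintro ⟨⟨x, y, z⟩, hm, hb⟩
    exact ⟨(z, y, x), mem_triples_reverse.mpr hm, (blockedTriple_comm G S x y z).mp hb⟩

/-- The descent lemma: following an unblocked trail from `j` downwards, every edge must point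
away from `j`, which is impossible since the trail ends at `k ∈ Xs`. -/
lemma descend {V : Type*} [DecidableEq V]
    (G : V → V → Prop) (Xs Ys : Finset V)
    (hpart : ∀ v, v ∈ Xs ∨ v ∈ Ys) (hdisj : Disjoint Xs Ys)
    (horder : ∀ a ∈ Ys, ∀ b ∈ Xs, ¬ G a b)
    (hacy : Acyclic G)
    (j k : V) (hj : j ∈ Ys) (hk : k ∈ Xs)
    (paY : Finset V) (hpaY : ∀ v, v ∈ paY ↔ v ∈ Ys ∧ G v j) :
    ∀ (rest : List V) (a b : V),
      Relation.ReflTransGen G j a → G a b →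
      List.Chain' (fun x y => G x y ∨ G y x) (a :: b :: rest) →
      (a :: b :: rest).getLast? = some k →
      (∀ t ∈ triples (a :: b :: rest), ¬ BlockedTriple G ((Xs \ {k}) ∪ paY) t) →
      False := by
  have hYreach : ∀ a, Relation.ReflTransGen G j a → a ∈ Ys := by
    intro a h
    induction h with
    | refl => exact hj
    | @tail b c hb hbc ih =>
      rcases hpart c with hx | hy
      · exact absurd hbc (horder b ih c hx)
      · exact hy
  intro rest
  induction rest with
  | nil =>
    intro a b hja hab _ hlast _
    simp only [List.getLast?_cons_cons, List.getLast?_singleton, Option.some.injEq] at hlast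
    subst hlast
    exact horder a (hYreach a hja) b hk hab
  | cons c r ih =>
    intro a b hja hab hchain hlast hnb
    have hjb : Relation.ReflTransGen G j b := hja.tail hab
    have hchain2 : List.Chain' (fun x y => G x y ∨ G y x) (b :: c :: r) :=
      (List.isChain_cons_cons.mp hchain).2
    have hbc : G b c ∨ G c b := (List.isChain_cons_cons.mp hchain2).1
    have hGbc : G b c := by
      rcases hbc with h | h
      · exact h
      exfalso
      have hnbt := hnb (a, b, c) (by simp [triples])
      unfold BlockedTriple at hnbt
      push_neg at hnbt
      obtain ⟨h1, _⟩ := hnbt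
      obtain ⟨d, hbd, hdS⟩ := h1 hab h
      have hdY : d ∈ Ys := hYreach d (hjb.trans hbd)
      have hGdj : G d j := by
        rcases Finset.mem_union.mp hdS with h' | h'
        · exact absurd hdY (Finset.disjoint_left.mp hdisj (Finset.mem_sdiff.mp h').1)
        · exact ((hpaY d).mp h').2
      exact hacy j (Relation.TransGen.tail' (hjb.trans hbd) hGdj)
    refine ih b c hjb hGbc hchain2 ?_ ?_
    · simpa only [List.getLast?_cons_cons] using hlast
    · intro t ht
      exact hnb t (by simp only [triples, List.mem_cons]; right; exact ht)

theorem cmb_contains_parents_and_dsep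
    {V : Type*} [Fintype V] [DecidableEq V]
    (G : V → V → Prop) (Indep : V → V → Finset V → Prop)
    (Xs Ys : Finset V)
    (hpart : ∀ v, v ∈ Xs ∨ v ∈ Ys) (hdisj : Disjoint Xs Ys)
    (horder : ∀ a ∈ Ys, ∀ b ∈ Xs, ¬ G a b)
    (hacy : Acyclic G)
    (hMarkov : ∀ a b S, DSep G S a b → Indep a b S)
    (hInt : ∀ a b c S, Indep a b (insert c S) → Indep a c (insert b S) →
      Indep a b S ∧ Indep a c S)
    (mb : V → Finset V)
    (hmb : ∀ j v, v ∈ mb j ↔ v ≠ j ∧ (G v j ∨ G j v ∨ ∃ c, G j c ∧ G v c)) :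
    ∀ j ∈ Ys,
      (mb j \ Xs ⊆ Ys) ∧
      (∀ v ∈ Ys, G v j → v ∈ mb j \ Xs) ∧
      (∀ k ∈ Xs, (¬ G k j ∧ ¬ G j k) →
        ∀ paY : Finset V, (∀ v, v ∈ paY ↔ v ∈ Ys ∧ G v j) →
          DSep G ((Xs \ {k}) ∪ paY) k j) := by
  intro j hj
  refine ⟨?_, ?_, ?_⟩
  · intro v hv
    exact (hpart v).resolve_left (Finset.mem_sdiff.mp hv).2
  · intro v hvY hGvj
    refine Finset.mem_sdiff.mpr ⟨(hmb j v).mpr ⟨?_, Or.inl hGvj⟩,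
      fun h => Finset.disjoint_left.mp hdisj h hvY⟩
    rintro rfl
    exact hacy v (Relation.TransGen.single hGvj)
  · rintro k hk ⟨hkj, hjk⟩ paY hpaY p hp
    obtain ⟨hchain, hhead, hlast, hnodup⟩ := hp
    rw [← blocked_reverse_iff]
    by_contra hnb
    unfold Blocked at hnb
    push_neg at hnb
    -- facts about q := p.reverse
    have hqchain : List.Chain' (fun x y => G x y ∨ G y x) p.reverse := by
      show List.IsChain _ p.reverse
      rw [List.isChain_reverse]
      exact (show List.IsChain _ p from hchain).imp (fun _ _ h => h.symm)
    have hqhead : p.reverse.head? = some j := by rw [List.head?_reverse]; exact hlast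
    have hqlast : p.reverse.getLast? = some k := by rw [List.getLast?_reverse]; exact hhead
    have hqnodup : p.reverse.Nodup := List.nodup_reverse.mpr hnodup
    set q := p.reverse with hq
    clear_value q
    rcases q with _ | ⟨a, q1⟩
    · simp at hqhead
    obtain rfl : a = j := by simpa using hqhead
    rcases q1 with _ | ⟨v1, q2⟩
    · have : a = k := by simpa using hqlast
      exact Finset.disjoint_left.mp hdisj (this ▸ hk) hj
    rcases q2 with _ | ⟨v2, r⟩
    · have hvk : v1 = k := by simpa using hqlast
      subst hvk
      rcases (List.isChain_cons_cons.mp hqchain).1 with h | h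
      · exact hjk h
      · exact hkj h
    -- q = a :: v1 :: v2 :: r
    have hedge : G a v1 ∨ G v1 a := (List.isChain_cons_cons.mp hqchain).1
    have hGjv1 : G a v1 := by
      rcases hedge with h | h
      · exact h
      exfalso
      have hnGjv1 : ¬ G a v1 := fun h' =>
        hacy a (Relation.TransGen.head h' (Relation.TransGen.single h))
      have hkmem : k ∈ v2 :: r := by
        apply mem_of_getLast?'
        simpa only [List.getLast?_cons_cons] using hqlast
      have hv1S : v1 ∈ (Xs \ {k}) ∪ paY := by
        rcases hpart v1 with hx | hy
        · refine Finset.mem_union_left _ (Finset.mem_sdiff.mpr ⟨hx, ?_⟩)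
          simp only [Finset.mem_singleton]
          rintro rfl
          exact (List.nodup_cons.mp (List.nodup_cons.mp hqnodup).2).1 hkmem
        · exact Finset.mem_union_right _ ((hpaY v1).mpr ⟨hy, h⟩)
      exact hnb (a, v1, v2) (by simp [triples])
        (Or.inr ⟨fun hc => hnGjv1 hc.1, hv1S⟩)
    exact descend G Xs Ys hpart hdisj horder hacy a k hj hk paY hpaY (v2 :: r) a v1
      Relation.ReflTransGen.refl hGjv1 hqchain hqlast hnb
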